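/- If A, B are positive reals satisfying 2A² + 8AB² + (2A + B²)² = 1/2 and A(6AB + B³)² = (3A² + 3AB² − 1/4)², then A = 140^{-1/2} and B = 2 · 140^{-1/4}. -/
import Mathlib


/-- the algebraic system determining the asymptotic constants
`A = 140^{-1/2}`, `B = 2 · 140^{-1/4}`. -/
theorem asymptotic_constants (A B : ℝ) (hA : 0 < A) (hB : 0 < B)
    (h1 : 2 * A ^ 2 + 8 * A * B ^ 2 + (2 * A + B ^ 2) ^ 2 = 1 / 2)
    (h2 : A * (6 * A * B + B ^ 3) ^ 2 = (3 * A ^ 2 + 3 * A * B ^ 2 - 1 / 4) ^ 2) :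
    A = (140:ℝ) ^ (-(1:ℝ) / 2) ∧ B = 2 * (140:ℝ) ^ (-(1:ℝ) / 4) := by
  set c : ℝ := (140:ℝ) ^ (-(1:ℝ) / 2) with hc
  set d : ℝ := (140:ℝ) ^ (-(1:ℝ) / 4) with hd
  have hcpos : 0 < c := Real.rpow_pos_of_pos (by norm_num) _
  have hdpos : 0 < d := Real.rpow_pos_of_pos (by norm_num) _
  have hc2 : c ^ 2 = 1 / 140 := by
    rw [hc, ← Real.rpow_natCast ((140:ℝ) ^ (-(1:ℝ)/2)) 2, ← Real.rpow_mul (by norm_num)]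
    norm_num
  have hd2 : d ^ 2 = c := by
    rw [hd, hc, ← Real.rpow_natCast ((140:ℝ) ^ (-(1:ℝ)/4)) 2, ← Real.rpow_mul (by norm_num)]
    norm_num
  -- Factored form of the system
  have hfac : B ^ 2 * (6 * A + B ^ 2) ^ 2 * (A - B ^ 2 / 4) = 0 := by
    linear_combination h2 + ((3*A^2 + 3*A*B^2 - 1/4 - B^2*(6*A+B^2)/2)/2) * h1
  have hAB : A = B ^ 2 / 4 := by
    rcases mul_eq_zero.mp hfac with h | h
    · rcases mul_eq_zero.mp h with h' | h'
      · exact absurd h' (by positivity)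
      · exact absurd h' (by positivity)
    · linarith
  have hB4 : B ^ 4 = 4 / 35 := by
    rw [hAB] at h1
    linear_combination (8/35) * h1
  have hB2 : B ^ 2 = 4 * c := by
    have hz : (B ^ 2 - 4 * c) * (B ^ 2 + 4 * c) = 0 := by
      linear_combination hB4 - 16 * hc2
    rcases mul_eq_zero.mp hz with h | h
    · linarith
    · nlinarith
  constructor
  · rw [hAB, hB2]; ring
  · have hz : (B - 2 * d) * (B + 2 * d) = 0 := by
      linear_combination hB2 - 4 * hd2
    rcases mul_eq_zero.mp hz with h | h
    · linarith
    · nlinarith
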